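/- arXiv:1806.00651 — 2 statements merged into one kernel-verified Lean document; each statement's English description precedes it below -/
import Mathlib

section
/- For j ≥ 1 and r ≥ 0, c_j^{(r)}(n) = Σ_{i=0}^{r} C(r,i) c_{j+i}(n) for all n ≥ 1. -/
/-- `d j n`: number of ordered factorisations of `n` into `j` positive factors. -/
noncomputable def d (j n : ℕ) : ℕ :=
  Nat.card {f : Fin j → ℕ // (∀ i, 1 ≤ f i) ∧ ∏ i, f i = n}

/-- `c j n`: number of ordered factorisations of `n` into `j` factors each `≥ 2`. -/
noncomputable def c (j n : ℕ) : ℕ :=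
  Nat.card {f : Fin j → ℕ // (∀ i, 2 ≤ f i) ∧ ∏ i, f i = n}

/-- the associated divisor function `c_j^{(r)}`. -/
noncomputable def cr (j : ℕ) : ℕ → ℕ → ℕ
  | 0, n => c j n
  | r + 1, n => ∑ m ∈ n.divisors, cr j r m

open Finset

/-- Finset version of the set counted by `c j n`. -/
def Ffac (j n : ℕ) : Finset (Fin j → ℕ) :=
  (Fintype.piFinset fun _ : Fin j => n.divisors).filter
    (fun f => (∀ i, 2 ≤ f i) ∧ ∏ i, f i = n)

lemma c_eq_Ffac (j n : ℕ) (hn : 1 ≤ n) : c j n = (Ffac j n).card := by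
  have hn0 : n ≠ 0 := Nat.one_le_iff_ne_zero.mp hn
  rw [c, ← Nat.card_eq_finsetCard]
  refine Nat.card_congr (Equiv.subtypeEquivRight fun f => ?_)
  simp only [Ffac, Finset.mem_filter, Fintype.mem_piFinset, Nat.mem_divisors]
  constructor
  · rintro ⟨h2, hp⟩
    exact ⟨fun i => ⟨hp ▸ Finset.dvd_prod_of_mem f (mem_univ i), hn0⟩, h2, hp⟩
  · rintro ⟨_, h2, hp⟩
    exact ⟨h2, hp⟩

/-- auxiliary Finset: tuples of factors ≥ 2 whose product divides `n`. -/
def Gfac (j n : ℕ) : Finset (Fin j → ℕ) :=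
  (Fintype.piFinset fun _ : Fin j => n.divisors).filter
    (fun f => (∀ i, 2 ≤ f i) ∧ ∏ i, f i ∣ n)

lemma key (j n : ℕ) (hn : 1 ≤ n) :
    ∑ m ∈ n.divisors, c j m = c j n + c (j + 1) n := by
  have hn0 : n ≠ 0 := Nat.one_le_iff_ne_zero.mp hn
  have hsum : ∑ m ∈ n.divisors, c j m = ∑ m ∈ n.divisors, (Ffac j m).card :=
    Finset.sum_congr rfl fun m hm => c_eq_Ffac j m (Nat.pos_of_mem_divisors hm)
  rw [hsum, c_eq_Ffac j n hn, c_eq_Ffac (j + 1) n hn]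
  -- Step A : Σ_{m|n} |Ffac j m| = |Gfac j n|
  have stepA : ∑ m ∈ n.divisors, (Ffac j m).card = (Gfac j n).card := by
    rw [Finset.card_eq_sum_card_fiberwise
      (f := fun f : Fin j → ℕ => ∏ i, f i) (t := n.divisors)
      (fun f hf => by
        simp only [Finset.mem_coe, Gfac, Finset.mem_filter] at hf
        exact Nat.mem_divisors.2 ⟨hf.2.2, hn0⟩)]
    refine Finset.sum_congr rfl fun m hm => ?_
    have hmd : m ∣ n := (Nat.mem_divisors.1 hm).1
    have hm0 : m ≠ 0 := (Nat.pos_of_mem_divisors hm).ne'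
    congr 1
    ext f
    simp only [Ffac, Gfac, Finset.mem_filter, Fintype.mem_piFinset, Nat.mem_divisors]
    constructor
    · rintro ⟨hmem, h2, hp⟩
      exact ⟨⟨fun i => ⟨(hp ▸ Finset.dvd_prod_of_mem f (mem_univ i)).trans hmd, hn0⟩,
        h2, hp ▸ hmd⟩, hp⟩
    · rintro ⟨⟨hmem, h2, hdvd⟩, hp⟩
      exact ⟨fun i => ⟨hp ▸ Finset.dvd_prod_of_mem f (mem_univ i), hm0⟩, h2, hp⟩
  rw [stepA]
  -- Step B : |Gfac j n| = |Ffac j n| + |Ffac (j+1) n|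
  rw [← Finset.card_filter_add_card_filter_not
    (s := Gfac j n) (p := fun f => ∏ i, f i = n)]
  congr 1
  · -- filter (∏ = n) = Ffac j n
    congr 1
    ext f
    simp only [Ffac, Gfac, Finset.mem_filter, Fintype.mem_piFinset]
    constructor
    · rintro ⟨⟨hmem, h2, _⟩, hp⟩
      exact ⟨hmem, h2, hp⟩
    · rintro ⟨hmem, h2, hp⟩
      exact ⟨⟨hmem, h2, hp ▸ dvd_rfl⟩, hp⟩
  · -- filter (∏ ≠ n) ≃ Ffac (j+1) n  via snoc
    refine Finset.card_bij (fun f _ => Fin.snoc f (n / ∏ i, f i)) ?_ ?_ ?_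
    · intro f hf
      simp only [Finset.mem_filter, Gfac, Fintype.mem_piFinset, Nat.mem_divisors] at hf
      obtain ⟨⟨hmem, h2, hdvd⟩, hne⟩ := hf
      have hmpos : 0 < ∏ i, f i := Finset.prod_pos fun i _ => lt_of_lt_of_le two_pos (h2 i)
      have hmn : (∏ i, f i) * (n / ∏ i, f i) = n := Nat.mul_div_cancel' hdvd
      have hq2 : 2 ≤ n / ∏ i, f i := by
        have h0 : n / ∏ i, f i ≠ 0 := by
          intro h; rw [h, mul_zero] at hmn; exact hn0 hmn.symm
        have h1 : n / ∏ i, f i ≠ 1 := by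
          intro h; rw [h, mul_one] at hmn; exact hne hmn
        exact (Nat.two_le_iff _).mpr ⟨h0, h1⟩
      have hprod : ∏ i, (Fin.snoc f (n / ∏ i, f i) : Fin (j + 1) → ℕ) i = n := by
        rw [Fin.prod_snoc]; exact hmn
      simp only [Ffac, Finset.mem_filter, Fintype.mem_piFinset, Nat.mem_divisors]
      refine ⟨fun i => ⟨?_, hn0⟩, ?_, hprod⟩
      · have hh : (Fin.snoc f (n / ∏ i, f i) : Fin (j + 1) → ℕ) i
            ∣ ∏ k, (Fin.snoc f (n / ∏ i, f i) : Fin (j + 1) → ℕ) k :=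
          Finset.dvd_prod_of_mem _ (mem_univ i)
        rw [hprod] at hh
        exact hh
      intro i
      refine Fin.lastCases ?_ ?_ i
      · simpa using hq2
      · intro k; simpa using h2 k
    · intro f hf g hg hfg
      funext i
      have := congrFun hfg i.castSucc
      simpa using this
    · intro g hg
      simp only [Ffac, Finset.mem_filter, Fintype.mem_piFinset, Nat.mem_divisors] at hg
      obtain ⟨hmem, h2, hp⟩ := hg
      have hsplit : (∏ i, Fin.init g i) * g (Fin.last j) = n := by
        rw [← hp, ← Fin.prod_snoc, Fin.snoc_init_self]
      have hpos : 0 < ∏ i, Fin.init g i :=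
        Finset.prod_pos fun i _ => lt_of_lt_of_le two_pos (h2 _)
      have hlast2 : 2 ≤ g (Fin.last j) := h2 _
      have hdiv : n / ∏ i, Fin.init g i = g (Fin.last j) := by
        rw [← hsplit, Nat.mul_div_cancel_left _ hpos]
      refine ⟨Fin.init g, ?_, ?_⟩
      · simp only [Finset.mem_filter, Gfac, Fintype.mem_piFinset, Nat.mem_divisors]
        refine ⟨⟨fun i => ⟨(Finset.dvd_prod_of_mem _ (mem_univ i)).trans
          ⟨g (Fin.last j), hsplit.symm⟩, hn0⟩, fun i => h2 _,
          ⟨g (Fin.last j), hsplit.symm⟩⟩, ?_⟩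
        intro hcon
        rw [hcon] at hsplit
        nlinarith [hn, hlast2]
      · show Fin.snoc (Fin.init g) (n / ∏ i, Fin.init g i) = g
        rw [hdiv]
        exact Fin.snoc_init_self g

lemma choose_sum (a : ℕ → ℕ) (r : ℕ) :
    ∑ i ∈ range (r + 2), (r + 1).choose i * a i
      = ∑ i ∈ range (r + 1), r.choose i * (a i + a (i + 1)) := by
  have h1 : ∑ i ∈ range (r + 2), (r + 1).choose i * a i
      = (∑ i ∈ range (r + 1), (r + 1).choose (i + 1) * a (i + 1)) + a 0 := by
    rw [Finset.sum_range_succ']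
    simp
  have h2 : ∑ i ∈ range (r + 1), (r + 1).choose (i + 1) * a (i + 1)
      = ∑ i ∈ range (r + 1), (r.choose i * a (i + 1) + r.choose (i + 1) * a (i + 1)) := by
    refine Finset.sum_congr rfl fun i _ => ?_
    rw [Nat.choose_succ_succ, add_mul]
  have h3 : (∑ i ∈ range (r + 1), r.choose (i + 1) * a (i + 1)) + a 0
      = ∑ i ∈ range (r + 1), r.choose i * a i := by
    have := Finset.sum_range_succ' (fun i => r.choose i * a i) (r + 1)
    rw [Finset.sum_range_succ] at this
    simp only [Nat.choose_zero_right, one_mul] at this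
    rw [Nat.choose_succ_self, zero_mul, add_zero] at this
    omega
  calc ∑ i ∈ range (r + 2), (r + 1).choose i * a i
      = (∑ i ∈ range (r + 1), (r.choose i * a (i + 1) + r.choose (i + 1) * a (i + 1))) + a 0 := by
        rw [h1, h2]
    _ = (∑ i ∈ range (r + 1), r.choose i * a (i + 1))
          + ((∑ i ∈ range (r + 1), r.choose (i + 1) * a (i + 1)) + a 0) := by
        rw [Finset.sum_add_distrib]; ring
    _ = (∑ i ∈ range (r + 1), r.choose i * a (i + 1))
          + ∑ i ∈ range (r + 1), r.choose i * a i := by rw [h3]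
    _ = ∑ i ∈ range (r + 1), r.choose i * (a i + a (i + 1)) := by
        rw [← Finset.sum_add_distrib]
        exact Finset.sum_congr rfl fun i _ => by ring

theorem stmt_14 (j r n : ℕ) (hj : 1 ≤ j) (hn : 1 ≤ n) :
    cr j r n = ∑ i ∈ Finset.range (r + 1), r.choose i * c (j + i) n := by
  induction r generalizing n with
  | zero => simp [cr]
  | succ r ih =>
    show ∑ m ∈ n.divisors, cr j r m = _
    calc ∑ m ∈ n.divisors, cr j r m
        = ∑ m ∈ n.divisors, ∑ i ∈ range (r + 1), r.choose i * c (j + i) m :=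
          Finset.sum_congr rfl fun m hm => ih m (Nat.pos_of_mem_divisors hm)
      _ = ∑ i ∈ range (r + 1), ∑ m ∈ n.divisors, r.choose i * c (j + i) m :=
          Finset.sum_comm
      _ = ∑ i ∈ range (r + 1), r.choose i * (c (j + i) n + c (j + i + 1) n) := by
          refine Finset.sum_congr rfl fun i _ => ?_
          rw [← Finset.mul_sum, key (j + i) n hn]
      _ = ∑ i ∈ range (r + 1 + 1), (r + 1).choose i * c (j + i) n := by
          rw [choose_sum (fun i => c (j + i) n) r]
          rfl
end

section
/- For n ≥ 2, the quantity N_n := Σ_{j=1}^{Ω(n)} c_j(n)·(c_j(n) + c_{j+1}(n)) equals 1 if and only if n is prime. -/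
lemma c_finite (j n : ℕ) (hn : 1 ≤ n) :
    Finite {f : Fin j → ℕ // (∀ i, 2 ≤ f i) ∧ ∏ i, f i = n} := by
  have hbd : ∀ (x : {f : Fin j → ℕ // (∀ i, 2 ≤ f i) ∧ ∏ i, f i = n}) (i : Fin j),
      x.1 i < n + 1 := by
    rintro ⟨f, hf, hp⟩ i
    have hdvd : f i ∣ n := by
      rw [← hp]; exact Finset.dvd_prod_of_mem _ (Finset.mem_univ i)
    exact Nat.lt_succ_of_le (Nat.le_of_dvd hn hdvd)
  apply Finite.of_injective
    (fun x : {f : Fin j → ℕ // (∀ i, 2 ≤ f i) ∧ ∏ i, f i = n} =>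
      (fun i => (⟨x.1 i, hbd x i⟩ : Fin (n+1)) : Fin j → Fin (n+1)))
  intro a b hab
  apply Subtype.ext
  funext i
  have := congrFun hab i
  simpa using congrArg Fin.val this

lemma c_one (n : ℕ) (hn : 2 ≤ n) : c 1 n = 1 := by
  have : Unique {f : Fin 1 → ℕ // (∀ i, 2 ≤ f i) ∧ ∏ i, f i = n} := by
    refine ⟨⟨⟨fun _ => n, fun _ => hn, by simp⟩⟩, ?_⟩
    rintro ⟨f, hf, hp⟩
    have h0 : f 0 = n := by simpa using hp
    apply Subtype.ext
    funext i
    have : i = 0 := Subsingleton.elim i 0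
    simp [this, h0]
  unfold c
  exact Nat.card_unique

lemma c_two_prime (p : ℕ) (hp : p.Prime) : c 2 p = 0 := by
  have : IsEmpty {f : Fin 2 → ℕ // (∀ i, 2 ≤ f i) ∧ ∏ i, f i = p} := by
    constructor
    rintro ⟨f, hf, hprod⟩
    have hprod' : f 0 * f 1 = p := by simpa [Fin.prod_univ_two] using hprod
    have h0 : f 0 ∣ p := ⟨f 1, hprod'.symm⟩
    rcases (Nat.Prime.eq_one_or_self_of_dvd hp _ h0) with h | h
    · have := hf 0; omega
    · have h1 : f 1 = 1 := by
        have heq : p * f 1 = p * 1 := by rw [mul_one]; nth_rewrite 1 [← h]; exact hprod'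
        exact Nat.eq_of_mul_eq_mul_left hp.pos heq
      have := hf 1; omega
  unfold c
  exact Nat.card_of_isEmpty

lemma c_two_pos (n : ℕ) (hn : 2 ≤ n) (hnp : ¬ n.Prime) : 1 ≤ c 2 n := by
  obtain ⟨m, hm, h2, hlt⟩ := Nat.exists_dvd_of_not_prime2 hn hnp
  obtain ⟨b, hb⟩ := hm
  have hb2 : 2 ≤ b := by
    rcases Nat.lt_or_ge b 2 with h | h
    · interval_cases b <;> omega
    · exact h
  have hfin := c_finite 2 n (by omega)
  have hne : Nonempty {f : Fin 2 → ℕ // (∀ i, 2 ≤ f i) ∧ ∏ i, f i = n} := by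
    refine ⟨⟨![m, b], ?_, ?_⟩⟩
    · intro i; fin_cases i <;> simp [h2, hb2]
    · simp [Fin.prod_univ_two, hb.symm]
  have : 0 < Nat.card {f : Fin 2 → ℕ // (∀ i, 2 ≤ f i) ∧ ∏ i, f i = n} := Nat.card_pos
  unfold c; exact this

theorem stmt_18 (n : ℕ) (hn : 2 ≤ n) :
    (∑ j ∈ Finset.Icc 1 n.primeFactorsList.length,
        c j n * (c j n + c (j + 1) n)) = 1 ↔ n.Prime := by
  constructor
  · intro hsum
    by_contra hnp
    have hΩ : 1 ≤ n.primeFactorsList.length := by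
      obtain ⟨p, hp, hpd⟩ := Nat.exists_prime_and_dvd (by omega : n ≠ 1)
      have : p ∈ n.primeFactorsList := (Nat.mem_primeFactorsList (by omega)).2 ⟨hp, hpd⟩
      exact List.length_pos_iff.2 (List.ne_nil_of_mem this)
    have h1mem : 1 ∈ Finset.Icc 1 n.primeFactorsList.length := by
      simp [hΩ]
    have hterm : 2 ≤ c 1 n * (c 1 n + c 2 n) := by
      rw [c_one n hn]
      have := c_two_pos n hn hnp
      omega
    have hle : c 1 n * (c 1 n + c 2 n) ≤
        ∑ j ∈ Finset.Icc 1 n.primeFactorsList.length, c j n * (c j n + c (j + 1) n) :=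
      Finset.single_le_sum (f := fun j => c j n * (c j n + c (j + 1) n))
        (fun i _ => Nat.zero_le _) h1mem
    omega
  · intro hp
    have : n.primeFactorsList = [n] := Nat.primeFactorsList_prime hp
    rw [this]
    simp [c_one n hn, c_two_prime n hp]
end
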